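/- Let μ, ν, λ ∈ Par_n with N_{μ,ν,λ} > 0. Then |μ ∧ ν| ≥ (|μ| + |ν| − |λ|)/2. -/

import Mathlib

/-- `μ` is a partition with at most `n` parts: a weakly decreasing sequence
`μ 0 ≥ μ 1 ≥ ⋯` of naturals (the paper's part `μ_{i+1}` is `μ i`, i.e. we use
0-indexing) vanishing from index `n` on. -/
def IsPartitionN (n : ℕ) (μ : ℕ → ℕ) : Prop :=
  Antitone μ ∧ ∀ i, n ≤ i → μ i = 0

/-- The cells `(row, column)` (both 0-indexed) of the skew shape `lam/mu`. -/
def skewCells (lam mu : ℕ → ℕ) : Set (ℕ × ℕ) :=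
  {p | mu p.1 ≤ p.2 ∧ p.2 < lam p.1}

/-- `T` is a Littlewood–Richardson skew tableau of shape `lam/mu` and content
`nu`: the shape `mu` is contained in `lam`, rows weakly increase, columns
strictly increase, the (0-indexed) letter `t` occurs `nu t` times, and every
prefix of the reverse reading word (rows read right-to-left, top-to-bottom)
contains at least as many letters `t` as letters `t+1`. -/
def IsLRTableau (lam mu nu : ℕ → ℕ) (T : ℕ × ℕ → ℕ) : Prop :=
  (∀ i, mu i ≤ lam i) ∧
  (∀ i j j', mu i ≤ j → j ≤ j' → j' < lam i → T (i, j) ≤ T (i, j')) ∧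
  (∀ i j, (i, j) ∈ skewCells lam mu → (i + 1, j) ∈ skewCells lam mu →
    T (i, j) < T (i + 1, j)) ∧
  (∀ t, Set.ncard {p ∈ skewCells lam mu | T p = t} = nu t) ∧
  (∀ i j t,
    Set.ncard {p ∈ skewCells lam mu |
        T p = t + 1 ∧ (p.1 < i ∨ (p.1 = i ∧ j ≤ p.2))} ≤
      Set.ncard {p ∈ skewCells lam mu |
        T p = t ∧ (p.1 < i ∨ (p.1 = i ∧ j ≤ p.2))})

/-- The Littlewood–Richardson coefficient `c^{lam}_{mu,nu}`: the number of
Littlewood–Richardson skew tableaux of shape `lam/mu` and content `nu`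
(tableaux are normalized to vanish off the shape). -/
noncomputable def lrCoeff (lam mu nu : ℕ → ℕ) : ℕ :=
  Set.ncard {T : ℕ × ℕ → ℕ | IsLRTableau lam mu nu T ∧
    ∀ p ∉ skewCells lam mu, T p = 0}

/-- The Newell–Littlewood number
`N_{μ,ν,λ} = ∑_{α,β,γ} c^μ_{α,β} c^ν_{α,γ} c^λ_{β,γ}`, realized as the number
of tuples `((α, β, γ), (T₁, T₂, T₃))` where `α, β, γ` are partitions and
`T₁, T₂, T₃` are Littlewood–Richardson tableaux witnessing the coefficients
`c^μ_{α,β}`, `c^ν_{α,γ}` and `c^λ_{β,γ}` respectively. -/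
noncomputable def nlNumber (mu nu lam : ℕ → ℕ) : ℕ :=
  Set.ncard {x : ((ℕ → ℕ) × (ℕ → ℕ) × (ℕ → ℕ)) ×
      ((ℕ × ℕ → ℕ) × (ℕ × ℕ → ℕ) × (ℕ × ℕ → ℕ)) |
    Antitone x.1.1 ∧ Antitone x.1.2.1 ∧ Antitone x.1.2.2 ∧
    (IsLRTableau mu x.1.1 x.1.2.1 x.2.1 ∧
      ∀ p ∉ skewCells mu x.1.1, x.2.1 p = 0) ∧
    (IsLRTableau nu x.1.1 x.1.2.2 x.2.2.1 ∧
      ∀ p ∉ skewCells nu x.1.1, x.2.2.1 p = 0) ∧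
    (IsLRTableau lam x.1.2.1 x.1.2.2 x.2.2.2 ∧
      ∀ p ∉ skewCells lam x.1.2.1, x.2.2.2 p = 0)}

/-- For `I = {i₁ < ⋯ < i_d} ⊆ {0, 1, 2, …}` (the 0-indexed version of the
paper's subsets of positive integers), `tauPartition I` is `τ(I)`, i.e. the
partition whose (0-indexed) part `t` is `i_{d-t} − (d−t−1) - 1`; for the
paper's 1-indexed sets this is `τ(I) = (i_d − d ≥ ⋯ ≥ i₂ − 2 ≥ i₁ − 1)`. -/
def tauPartition (I : Finset ℕ) : ℕ → ℕ := fun t =>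
  if t < I.card then
    (I.sort (· ≤ ·)).getD (I.card - 1 - t) 0 - (I.card - 1 - t)
  else 0


/-! ### Auxiliary lemmas -/

def skewFinset (n : ℕ) (lam mu : ℕ → ℕ) : Finset (ℕ × ℕ) :=
  (Finset.range n).biUnion fun i => {i} ×ˢ Finset.Ico (mu i) (lam i)

lemma skewCells_eq (n : ℕ) (lam mu : ℕ → ℕ) (hv : ∀ i, n ≤ i → lam i = 0) :
    skewCells lam mu = ↑(skewFinset n lam mu) := by
  ext ⟨i, j⟩
  simp only [skewCells, Set.mem_setOf_eq, skewFinset, Finset.coe_biUnion,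
    Finset.mem_coe, Finset.mem_biUnion, Finset.mem_range, Finset.mem_product,
    Finset.mem_singleton, Finset.mem_Ico, Set.mem_iUnion]
  constructor
  · rintro ⟨h1, h2⟩
    refine ⟨i, ?_, rfl, h1, h2⟩
    by_contra hn
    rw [hv i (le_of_not_gt hn)] at h2
    omega
  · rintro ⟨k, _, rfl, h⟩; exact h

lemma card_skewFinset (n : ℕ) (lam mu : ℕ → ℕ) (hle : ∀ i, mu i ≤ lam i) :
    ((skewFinset n lam mu).card : ℤ) =
      ∑ i ∈ Finset.range n, ((lam i : ℤ) - (mu i : ℤ)) := by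
  rw [skewFinset, Finset.card_biUnion]
  · push_cast
    refine Finset.sum_congr rfl fun i _ => ?_
    rw [Finset.card_product, Finset.card_singleton, Nat.card_Ico, one_mul]
    have := hle i
    push_cast [Nat.cast_sub this]
    ring
  · intro x _ y _ hxy
    rw [Function.onFun, Finset.disjoint_left]
    rintro ⟨a, b⟩ h1 h2
    simp only [Finset.mem_product, Finset.mem_singleton] at h1 h2
    exact hxy (h1.1 ▸ h2.1.symm ▸ rfl)

lemma content_sum {lam mu nu : ℕ → ℕ} {T : ℕ × ℕ → ℕ}
    (hT : IsLRTableau lam mu nu T) (s : Finset (ℕ × ℕ))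
    (hs : skewCells lam mu = ↑s) (F : Finset ℕ)
    (hF : ∀ p ∈ s, T p ∈ F) :
    s.card = ∑ t ∈ F, nu t := by
  rw [Finset.card_eq_sum_card_fiberwise hF]
  refine Finset.sum_congr rfl fun t _ => ?_
  rw [← hT.2.2.2.1 t]
  have : {p ∈ skewCells lam mu | T p = t} = ↑(s.filter fun p => T p = t) := by
    ext p
    simp [hs, Set.mem_setOf_eq]
  rw [this, Set.ncard_coe_finset]


/-- If `N_{μ,ν,λ} > 0` then `|μ ∧ ν| ≥ (|μ| + |ν| − |λ|) / 2` (stated as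
`|μ| + |ν| − |λ| ≤ 2 |μ ∧ ν|`, where `(μ ∧ ν)_i = min (μ_i, ν_i)`). -/
theorem wedge_of_nlNumber_pos (n : ℕ) (μ ν lam : ℕ → ℕ)
    (hμ : IsPartitionN n μ) (hν : IsPartitionN n ν) (hlam : IsPartitionN n lam)
    (hN : 0 < nlNumber μ ν lam) :
    (∑ i ∈ Finset.range n, (μ i : ℤ)) + (∑ i ∈ Finset.range n, (ν i : ℤ)) -
      (∑ i ∈ Finset.range n, (lam i : ℤ)) ≤
      2 * ∑ i ∈ Finset.range n, (min (μ i) (ν i) : ℤ) := by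
  obtain ⟨⟨⟨a, b, c⟩, T₁, T₂, T₃⟩, -, -, -, ⟨h1, -⟩, ⟨h2, -⟩, ⟨h3, -⟩⟩ :
      (Set.Nonempty {x : ((ℕ → ℕ) × (ℕ → ℕ) × (ℕ → ℕ)) ×
        ((ℕ × ℕ → ℕ) × (ℕ × ℕ → ℕ) × (ℕ × ℕ → ℕ)) |
      Antitone x.1.1 ∧ Antitone x.1.2.1 ∧ Antitone x.1.2.2 ∧
      (IsLRTableau μ x.1.1 x.1.2.1 x.2.1 ∧
        ∀ p ∉ skewCells μ x.1.1, x.2.1 p = 0) ∧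
      (IsLRTableau ν x.1.1 x.1.2.2 x.2.2.1 ∧
        ∀ p ∉ skewCells ν x.1.1, x.2.2.1 p = 0) ∧
      (IsLRTableau lam x.1.2.1 x.1.2.2 x.2.2.2 ∧
        ∀ p ∉ skewCells lam x.1.2.1, x.2.2.2 p = 0)}) :=
    Set.nonempty_of_ncard_ne_zero hN.ne'
  -- the three skew shapes as finsets
  set s1 := skewFinset n μ a with hs1def
  set s2 := skewFinset n ν a with hs2def
  set s3 := skewFinset n lam b with hs3def
  have hc1 : skewCells μ a = ↑s1 := skewCells_eq n μ a hμ.2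
  have hc2 : skewCells ν a = ↑s2 := skewCells_eq n ν a hν.2
  have hc3 : skewCells lam b = ↑s3 := skewCells_eq n lam b hlam.2
  set F : Finset ℕ :=
    ((Finset.range n ∪ s1.image T₁) ∪ s2.image T₂) ∪ s3.image T₃ with hF
  -- cell counts via shapes
  have e1 : (s1.card : ℤ) = ∑ i ∈ Finset.range n, ((μ i : ℤ) - (a i : ℤ)) :=
    card_skewFinset n μ a h1.1
  have e2 : (s2.card : ℤ) = ∑ i ∈ Finset.range n, ((ν i : ℤ) - (a i : ℤ)) :=
    card_skewFinset n ν a h2.1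
  have e3 : (s3.card : ℤ) = ∑ i ∈ Finset.range n, ((lam i : ℤ) - (b i : ℤ)) :=
    card_skewFinset n lam b h3.1
  -- cell counts via contents
  have f1 : s1.card = ∑ t ∈ F, b t :=
    content_sum h1 s1 hc1 F fun p hp => by
      simp only [hF, Finset.mem_union]
      exact Or.inl (Or.inl (Or.inr (Finset.mem_image_of_mem T₁ hp)))
  have f2 : s2.card = ∑ t ∈ F, c t :=
    content_sum h2 s2 hc2 F fun p hp => by
      simp only [hF, Finset.mem_union]
      exact Or.inl (Or.inr (Finset.mem_image_of_mem T₂ hp))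
  have f3 : s3.card = ∑ t ∈ F, c t :=
    content_sum h3 s3 hc3 F fun p hp => by
      simp only [hF, Finset.mem_union]
      exact Or.inr (Finset.mem_image_of_mem T₃ hp)
  -- β is supported on range n (it is contained in λ)
  have hbF : ∑ t ∈ Finset.range n, b t = ∑ t ∈ F, b t := by
    refine Finset.sum_subset ?_ fun t _ ht => ?_
    · intro t ht
      simp only [hF, Finset.mem_union]
      exact Or.inl (Or.inl (Or.inl ht))
    · have hb1 : b t ≤ lam t := h3.1 t
      have hb2 : lam t = 0 := hlam.2 t (by simpa using ht)
      omega
  -- α is dominated by min μ ν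
  have hamin : ∑ i ∈ Finset.range n, (a i : ℤ) ≤
      ∑ i ∈ Finset.range n, (min (μ i) (ν i) : ℤ) := by
    refine Finset.sum_le_sum fun i _ => ?_
    have := h1.1 i
    have := h2.1 i
    have : a i ≤ min (μ i) (ν i) := le_min (h1.1 i) (h2.1 i)
    exact_mod_cast this
  have f1' : (s1.card : ℤ) = ∑ t ∈ F, (b t : ℤ) := by exact_mod_cast congrArg (Nat.cast : ℕ → ℤ) f1
  have f2' : (s2.card : ℤ) = ∑ t ∈ F, (c t : ℤ) := by exact_mod_cast congrArg (Nat.cast : ℕ → ℤ) f2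
  have f3' : (s3.card : ℤ) = ∑ t ∈ F, (c t : ℤ) := by exact_mod_cast congrArg (Nat.cast : ℕ → ℤ) f3
  have hbF' : ∑ t ∈ Finset.range n, (b t : ℤ) = ∑ t ∈ F, (b t : ℤ) := by
    exact_mod_cast congrArg (Nat.cast : ℕ → ℤ) hbF
  rw [Finset.sum_sub_distrib] at e1 e2 e3
  linarith
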